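/- Let θ > 0 and λ ∈ ℂ with Re(λ)·θ ∉ πℤ. Then λ ≠ 0 and sin(λθ) ≠ 0, and for every continuous g : [0,θ] → ℂ and all w₀, w_θ ∈ ℂ, the function Φ(φ) := w₀·cos(λ(θ−φ))/(λ sin(λθ)) − w_θ·cos(λφ)/(λ sin(λθ)) + ∫₀^θ G(φ,φ̃,λ) g(φ̃) dφ̃, where G(φ,φ̃,λ) = cos(λφ̃)cos(λ(θ−φ))/(λ sin(λθ)) for 0 ≤ φ̃ < φ ≤ θ and G(φ,φ̃,λ) = cos(λ(θ−φ̃))cos(λφ)/(λ sin(λθ)) for 0 ≤ φ < φ̃ ≤ θ, is the unique twice continuously differentiable function on [0,θ] satisfying Φ''(φ) + λ²Φ(φ) = g(φ) for all φ ∈ (0,θ), Φ'(0) = w₀ and Φ'(θ) = w_θ. -/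

import Mathlib

open MeasureTheory Set intervalIntegral Topology Filter

noncomputable section HelmholtzAux
variable (θ : ℝ) (lam : ℂ) (g : ℝ → ℂ) (w₀ wθ : ℂ)

def hgc : ℝ → ℂ := fun t => g (max 0 (min θ t))

lemma hgc_eqOn : EqOn (hgc θ g) g (Icc 0 θ) := by
  intro t ht
  simp only [hgc, min_eq_right ht.2, max_eq_right ht.1]

lemma hgc_continuous (hθ : 0 ≤ θ) (hg : ContinuousOn g (Icc 0 θ)) :
    Continuous (hgc θ g) := by
  apply hg.comp_continuous (by fun_prop)
  intro t
  exact ⟨le_max_left _ _, max_le hθ (min_le_left _ _)⟩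
def hF : ℝ → ℂ := fun x => ∫ t in (0:ℝ)..x, Complex.cos (lam * t) * hgc θ g t
def hB : ℝ → ℂ := fun x => ∫ t in (0:ℝ)..x, Complex.cos (lam * θ - lam * t) * hgc θ g t

lemma hasDerivAt_ofRealC (x : ℝ) : HasDerivAt (fun y : ℝ => (y : ℂ)) 1 x := by
  exact Complex.ofRealCLM.hasDerivAt (x := x)

lemma hasDerivAt_cos_sub (c d : ℂ) (x : ℝ) :
    HasDerivAt (fun y : ℝ => Complex.cos (c - d * y)) (Complex.sin (c - d * x) * d) x := by
  have h0 : HasDerivAt (fun y : ℝ => c - d * (y : ℂ)) (-d) x := by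
    simpa using (((hasDerivAt_ofRealC x).const_mul d).const_sub c)
  have h2 := (Complex.hasDerivAt_cos (c - d * x)).comp x h0
  have hv : -Complex.sin (c - d * (x:ℂ)) * -d = Complex.sin (c - d * x) * d := by ring
  rw [hv] at h2; exact h2

lemma hasDerivAt_sin_sub (c d : ℂ) (x : ℝ) :
    HasDerivAt (fun y : ℝ => Complex.sin (c - d * y)) (-(Complex.cos (c - d * x) * d)) x := by
  have h0 : HasDerivAt (fun y : ℝ => c - d * (y : ℂ)) (-d) x := by
    simpa using (((hasDerivAt_ofRealC x).const_mul d).const_sub c)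
  have h2 := (Complex.hasDerivAt_sin (c - d * x)).comp x h0
  have hv : Complex.cos (c - d * (x:ℂ)) * -d = -(Complex.cos (c - d * x) * d) := by ring
  rw [hv] at h2; exact h2

lemma hasDerivAt_cos_mul (d : ℂ) (x : ℝ) :
    HasDerivAt (fun y : ℝ => Complex.cos (d * y)) (-(Complex.sin (d * x) * d)) x := by
  have h0 : HasDerivAt (fun y : ℝ => d * (y : ℂ)) d x := by
    simpa using ((hasDerivAt_ofRealC x).const_mul d)
  have h2 := (Complex.hasDerivAt_cos (d * x)).comp x h0
  have hv : -Complex.sin (d * (x:ℂ)) * d = -(Complex.sin (d * x) * d) := by ring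
  rw [hv] at h2; exact h2

lemma hasDerivAt_sin_mul (d : ℂ) (x : ℝ) :
    HasDerivAt (fun y : ℝ => Complex.sin (d * y)) (Complex.cos (d * x) * d) x := by
  have h0 : HasDerivAt (fun y : ℝ => d * (y : ℂ)) d x := by
    simpa using ((hasDerivAt_ofRealC x).const_mul d)
  exact (Complex.hasDerivAt_sin (d * x)).comp x h0

lemma cont_a (hgcont : Continuous (hgc θ g)) :
    Continuous (fun t : ℝ => Complex.cos (lam * t) * hgc θ g t) :=
  (Complex.continuous_cos.comp (by fun_prop)).mul hgcont
lemma cont_b (hgcont : Continuous (hgc θ g)) :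
    Continuous (fun t : ℝ => Complex.cos (lam * θ - lam * t) * hgc θ g t) :=
  (Complex.continuous_cos.comp (by fun_prop)).mul hgcont

lemma hasDerivAt_hF (hgcont : Continuous (hgc θ g)) (x : ℝ) :
    HasDerivAt (hF θ lam g) (Complex.cos (lam * x) * hgc θ g x) x :=
  ((cont_a θ lam g hgcont).integral_hasStrictDerivAt 0 x).hasDerivAt

lemma hasDerivAt_hB (hgcont : Continuous (hgc θ g)) (x : ℝ) :
    HasDerivAt (hB θ lam g) (Complex.cos (lam * θ - lam * x) * hgc θ g x) x :=
  ((cont_b θ lam g hgcont).integral_hasStrictDerivAt 0 x).hasDerivAt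

def hH : ℝ → ℂ := fun x =>
  (1 / (lam * Complex.sin (lam * θ))) *
    (Complex.cos (lam * θ - lam * x) * (w₀ + hF θ lam g x) +
      Complex.cos (lam * x) * (hB θ lam g θ - hB θ lam g x - wθ))

def hHd : ℝ → ℂ := fun x =>
  (1 / Complex.sin (lam * θ)) *
    (Complex.sin (lam * θ - lam * x) * (w₀ + hF θ lam g x) -
      Complex.sin (lam * x) * (hB θ lam g θ - hB θ lam g x - wθ))

lemma hasDerivAt_hH (hlam : lam ≠ 0) (hs : Complex.sin (lam * θ) ≠ 0)
    (hgcont : Continuous (hgc θ g)) (x : ℝ) :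
    HasDerivAt (hH θ lam g w₀ wθ) (hHd θ lam g w₀ wθ x) x := by
  have h1 := (hasDerivAt_cos_sub (lam * θ) lam x).mul
    ((hasDerivAt_hF θ lam g hgcont x).const_add w₀)
  have h2 := (hasDerivAt_cos_mul lam x).mul
    (((hasDerivAt_hB θ lam g hgcont x).const_sub (hB θ lam g θ)).sub_const wθ)
  have h3 := (h1.add h2).const_mul (1 / (lam * Complex.sin (lam * θ)))
  convert h3 using 2
  · rfl
  · rfl
  unfold hHd
  field_simp
  ring
end HelmholtzAux

noncomputable section HelmholtzAux2
variable (θ : ℝ) (lam : ℂ) (g : ℝ → ℂ) (w₀ wθ : ℂ)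

lemma hasDerivAt_hHd (hlam : lam ≠ 0) (hs : Complex.sin (lam * θ) ≠ 0)
    (hgcont : Continuous (hgc θ g)) (x : ℝ) :
    HasDerivAt (hHd θ lam g w₀ wθ) (hgc θ g x - lam ^ 2 * hH θ lam g w₀ wθ x) x := by
  have h1 := (hasDerivAt_sin_sub (lam * θ) lam x).mul
    ((hasDerivAt_hF θ lam g hgcont x).const_add w₀)
  have h2 := (hasDerivAt_sin_mul lam x).mul
    (((hasDerivAt_hB θ lam g hgcont x).const_sub (hB θ lam g θ)).sub_const wθ)
  have h3 := (h1.sub h2).const_mul (1 / Complex.sin (lam * θ))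
  have key : Complex.sin (lam * θ) =
      Complex.sin (lam * θ - lam * x) * Complex.cos (lam * x) +
        Complex.cos (lam * θ - lam * x) * Complex.sin (lam * x) := by
    conv_lhs => rw [show lam * (θ:ℂ) = (lam * θ - lam * x) + lam * x by ring]
    rw [Complex.sin_add]
  have hval : hgc θ g x - lam ^ 2 * hH θ lam g w₀ wθ x =
      1 / Complex.sin (lam * θ) *
        (-(Complex.cos (lam*θ - lam*x) * lam) * (w₀ + hF θ lam g x) +
           Complex.sin (lam*θ - lam*x) * (Complex.cos (lam*x) * hgc θ g x) -
          ((Complex.cos (lam*x) * lam) * (hB θ lam g θ - hB θ lam g x - wθ) +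
           Complex.sin (lam*x) * -(Complex.cos (lam*θ - lam*x) * hgc θ g x))) := by
    unfold hH
    field_simp
    simp only [mul_sub]
    linear_combination (hgc θ g x) * key
  rw [hval]
  exact h3

lemma cont_hH (hlam : lam ≠ 0) (hs : Complex.sin (lam * θ) ≠ 0)
    (hgcont : Continuous (hgc θ g)) : Continuous (hH θ lam g w₀ wθ) :=
  continuous_iff_continuousAt.2 fun x => (hasDerivAt_hH θ lam g w₀ wθ hlam hs hgcont x).continuousAt

lemma cont_hHd (hlam : lam ≠ 0) (hs : Complex.sin (lam * θ) ≠ 0)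
    (hgcont : Continuous (hgc θ g)) : Continuous (hHd θ lam g w₀ wθ) :=
  continuous_iff_continuousAt.2 fun x =>
    (hasDerivAt_hHd θ lam g w₀ wθ hlam hs hgcont x).continuousAt

lemma deriv_hH (hlam : lam ≠ 0) (hs : Complex.sin (lam * θ) ≠ 0)
    (hgcont : Continuous (hgc θ g)) : deriv (hH θ lam g w₀ wθ) = hHd θ lam g w₀ wθ :=
  funext fun x => (hasDerivAt_hH θ lam g w₀ wθ hlam hs hgcont x).deriv

lemma contDiff_hH (hlam : lam ≠ 0) (hs : Complex.sin (lam * θ) ≠ 0)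
    (hgcont : Continuous (hgc θ g)) : ContDiff ℝ 2 (hH θ lam g w₀ wθ) := by
  rw [show (2 : WithTop ℕ∞) = 1 + 1 from rfl, contDiff_succ_iff_deriv]
  refine ⟨fun x => (hasDerivAt_hH θ lam g w₀ wθ hlam hs hgcont x).differentiableAt, by simp, ?_⟩
  rw [deriv_hH θ lam g w₀ wθ hlam hs hgcont, contDiff_one_iff_deriv]
  refine ⟨fun x => (hasDerivAt_hHd θ lam g w₀ wθ hlam hs hgcont x).differentiableAt, ?_⟩
  have : deriv (hHd θ lam g w₀ wθ) = fun x => hgc θ g x - lam ^ 2 * hH θ lam g w₀ wθ x :=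
    funext fun x => (hasDerivAt_hHd θ lam g w₀ wθ hlam hs hgcont x).deriv
  rw [this]
  exact hgcont.sub (continuous_const.mul (cont_hH θ lam g w₀ wθ hlam hs hgcont))

lemma hHd_zero (hs : Complex.sin (lam * θ) ≠ 0) : hHd θ lam g w₀ wθ 0 = w₀ := by
  have h0 : hF θ lam g 0 = 0 := intervalIntegral.integral_same
  unfold hHd
  rw [h0]
  push_cast
  simp only [mul_zero, sub_zero, Complex.sin_zero, zero_mul, add_zero]
  field_simp

lemma hHd_theta (hs : Complex.sin (lam * θ) ≠ 0) : hHd θ lam g w₀ wθ θ = wθ := by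
  unfold hHd
  simp only [sub_self, Complex.sin_zero, zero_mul, zero_sub]
  field_simp

lemma phi_eq_hH (hθ : 0 < θ) (hlam : lam ≠ 0) (hs : Complex.sin (lam * θ) ≠ 0)
    (hg : ContinuousOn g (Icc 0 θ)) (hgcont : Continuous (hgc θ g))
    {φ : ℝ} (hφ : φ ∈ Icc 0 θ) :
    w₀ * Complex.cos (lam * ((θ - φ : ℝ) : ℂ)) / (lam * Complex.sin (lam * θ))
      - wθ * Complex.cos (lam * (φ : ℂ)) / (lam * Complex.sin (lam * θ))
      + (∫ t in (0:ℝ)..θ,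
          (if t < φ then
            Complex.cos (lam * (t : ℂ)) * Complex.cos (lam * ((θ - φ : ℝ) : ℂ))
              / (lam * Complex.sin (lam * θ))
          else
            Complex.cos (lam * ((θ - t : ℝ) : ℂ)) * Complex.cos (lam * (φ : ℂ))
              / (lam * Complex.sin (lam * θ))) * g t)
      = hH θ lam g w₀ wθ φ := by
  set s : ℂ := lam * Complex.sin (lam * θ) with hsdef
  have hsne : s ≠ 0 := mul_ne_zero hlam hs
  set P : ℝ → ℂ := fun t =>
    (if t < φ then
      Complex.cos (lam * (t : ℂ)) * Complex.cos (lam * ((θ - φ : ℝ) : ℂ)) / s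
    else
      Complex.cos (lam * ((θ - t : ℝ) : ℂ)) * Complex.cos (lam * (φ : ℂ)) / s) * g t
    with hPdef
  have hne : ∀ᵐ t : ℝ ∂volume, t ≠ φ := by
    rw [ae_iff, show {a : ℝ | ¬ a ≠ φ} = {φ} by ext t; simp]
    exact measure_singleton φ
  -- first piece
  have h1 : (∫ t in (0:ℝ)..φ, P t)
      = Complex.cos (lam * ((θ - φ : ℝ) : ℂ)) / s * hF θ lam g φ := by
    rw [hF, ← intervalIntegral.integral_const_mul]
    apply intervalIntegral.integral_congr_ae
    filter_upwards [hne] with t ht hmem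
    rw [uIoc_of_le hφ.1] at hmem
    have htlt : t < φ := lt_of_le_of_ne hmem.2 ht
    have htIcc : t ∈ Icc 0 θ := ⟨hmem.1.le, le_trans hmem.2 hφ.2⟩
    simp only [hPdef, if_pos htlt]
    rw [hgc_eqOn θ g htIcc]
    ring
  -- second piece
  have h2 : (∫ t in φ..θ, P t)
      = Complex.cos (lam * (φ : ℂ)) / s * (hB θ lam g θ - hB θ lam g φ) := by
    have hbint : ∀ u v : ℝ, IntervalIntegrable
        (fun t : ℝ => Complex.cos (lam * θ - lam * t) * hgc θ g t) volume u v :=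
      fun u v => (cont_b θ lam g hgcont).intervalIntegrable u v
    have hsplit := intervalIntegral.integral_add_adjacent_intervals (a := 0) (b := φ) (c := θ)
      (hbint 0 φ) (hbint φ θ)
    have hBθ : (∫ t in φ..θ, Complex.cos (lam * θ - lam * t) * hgc θ g t)
        = hB θ lam g θ - hB θ lam g φ := by
      unfold hB; linear_combination hsplit
    rw [← hBθ, ← intervalIntegral.integral_const_mul]
    apply intervalIntegral.integral_congr
    intro t hmem
    rw [uIcc_of_le hφ.2] at hmem
    have htle : ¬ t < φ := not_lt.2 hmem.1
    have htIcc : t ∈ Icc 0 θ := ⟨le_trans hφ.1 hmem.1, hmem.2⟩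
    simp only [hPdef, if_neg htle]
    rw [← hgc_eqOn θ g htIcc]
    have harg : lam * ((θ - t : ℝ) : ℂ) = lam * θ - lam * t := by push_cast; ring
    rw [harg]
    ring
  -- integrability of the two pieces
  have hi1 : IntervalIntegrable P volume 0 φ := by
    apply IntervalIntegrable.congr_ae (f := fun t =>
      Complex.cos (lam * ((θ - φ : ℝ) : ℂ)) / s * (Complex.cos (lam * t) * hgc θ g t))
    · exact (continuous_const.mul (cont_a θ lam g hgcont)).intervalIntegrable 0 φ
    · filter_upwards [ae_restrict_of_ae hne, ae_restrict_mem measurableSet_uIoc]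
        with t ht hmem
      rw [uIoc_of_le hφ.1] at hmem
      have htlt : t < φ := lt_of_le_of_ne hmem.2 ht
      have htIcc : t ∈ Icc 0 θ := ⟨hmem.1.le, le_trans hmem.2 hφ.2⟩
      simp only [hPdef, if_pos htlt]
      rw [hgc_eqOn θ g htIcc]
      ring
  have hi2 : IntervalIntegrable P volume φ θ := by
    apply IntervalIntegrable.congr_ae (f := fun t =>
      Complex.cos (lam * (φ : ℂ)) / s * (Complex.cos (lam * θ - lam * t) * hgc θ g t))
    · exact (continuous_const.mul (cont_b θ lam g hgcont)).intervalIntegrable φ θ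
    · filter_upwards [ae_restrict_mem measurableSet_uIoc] with t hmem
      rw [uIoc_of_le hφ.2] at hmem
      have htle : ¬ t < φ := not_lt.2 hmem.1.le
      have htIcc : t ∈ Icc 0 θ := ⟨le_trans hφ.1 hmem.1.le, hmem.2⟩
      simp only [hPdef, if_neg htle]
      rw [← hgc_eqOn θ g htIcc]
      have harg : lam * ((θ - t : ℝ) : ℂ) = lam * θ - lam * t := by push_cast; ring
      rw [harg]
      ring
  have hsplitP := intervalIntegral.integral_add_adjacent_intervals (a := 0) (b := φ) (c := θ)
    hi1 hi2
  rw [show (∫ t in (0:ℝ)..θ, P t) = (∫ t in (0:ℝ)..φ, P t) + ∫ t in φ..θ, P t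
    from hsplitP.symm, h1, h2]
  unfold hH
  have harg2 : lam * ((θ - φ : ℝ) : ℂ) = lam * θ - lam * φ := by push_cast; ring
  rw [harg2, ← hsdef]
  field_simp
  ring
end HelmholtzAux2

/-- Green's function representation of the unique solution of the Mellin-transformed Neumann
problem `Φ'' + λ²Φ = g` on `(0,θ)` with `Φ'(0) = w₀`, `Φ'(θ) = w_θ`, when `Re(λ)·θ ∉ πℤ`. -/
theorem helmholtz_green_representation (θ : ℝ) (hθ : 0 < θ) (lam : ℂ)
    (hres : ∀ k : ℤ, lam.re * θ ≠ k * Real.pi) :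
    lam ≠ 0 ∧ Complex.sin (lam * θ) ≠ 0 ∧
    ∀ g : ℝ → ℂ, ContinuousOn g (Icc 0 θ) → ∀ w₀ wθ : ℂ,
    ∀ Φ : ℝ → ℂ,
      (∀ φ : ℝ, Φ φ =
        w₀ * Complex.cos (lam * ((θ - φ : ℝ) : ℂ)) / (lam * Complex.sin (lam * θ))
        - wθ * Complex.cos (lam * (φ : ℂ)) / (lam * Complex.sin (lam * θ))
        + ∫ t in (0:ℝ)..θ,
            (if t < φ then
              Complex.cos (lam * (t : ℂ)) * Complex.cos (lam * ((θ - φ : ℝ) : ℂ))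
                / (lam * Complex.sin (lam * θ))
            else
              Complex.cos (lam * ((θ - t : ℝ) : ℂ)) * Complex.cos (lam * (φ : ℂ))
                / (lam * Complex.sin (lam * θ))) * g t) →
      (ContDiffOn ℝ 2 Φ (Icc 0 θ) ∧
        (∀ φ ∈ Ioo (0:ℝ) θ,
          derivWithin (derivWithin Φ (Icc 0 θ)) (Icc 0 θ) φ + lam^2 * Φ φ = g φ) ∧
        derivWithin Φ (Icc 0 θ) 0 = w₀ ∧ derivWithin Φ (Icc 0 θ) θ = wθ) ∧
      ∀ Ψ : ℝ → ℂ,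
        (ContDiffOn ℝ 2 Ψ (Icc 0 θ) ∧
          (∀ φ ∈ Ioo (0:ℝ) θ,
            derivWithin (derivWithin Ψ (Icc 0 θ)) (Icc 0 θ) φ + lam^2 * Ψ φ = g φ) ∧
          derivWithin Ψ (Icc 0 θ) 0 = w₀ ∧ derivWithin Ψ (Icc 0 θ) θ = wθ) →
        EqOn Ψ Φ (Icc 0 θ) := by
  have hlam : lam ≠ 0 := by
    intro h
    exact hres 0 (by simp [h])
  have hsin : Complex.sin (lam * θ) ≠ 0 := by
    intro h
    obtain ⟨k, hk⟩ := Complex.sin_eq_zero_iff.1 h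
    apply hres k
    have := congrArg Complex.re hk
    simpa using this
  refine ⟨hlam, hsin, ?_⟩
  intro g hg w₀ wθ Φ hΦ
  have hgcont : Continuous (hgc θ g) := hgc_continuous θ g hθ.le hg
  have hΦH : EqOn Φ (hH θ lam g w₀ wθ) (Icc 0 θ) := fun φ hφ => by
    rw [hΦ φ]
    exact phi_eq_hH θ lam g w₀ wθ hθ hlam hsin hg hgcont hφ
  have hud : UniqueDiffOn ℝ (Icc (0:ℝ) θ) := uniqueDiffOn_Icc hθ
  have hd1 : ∀ x ∈ Icc (0:ℝ) θ,
      derivWithin (hH θ lam g w₀ wθ) (Icc 0 θ) x = hHd θ lam g w₀ wθ x := fun x hx =>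
    ((hasDerivAt_hH θ lam g w₀ wθ hlam hsin hgcont x).hasDerivWithinAt).derivWithin (hud x hx)
  have hdΦ : ∀ x ∈ Icc (0:ℝ) θ,
      derivWithin Φ (Icc 0 θ) x = hHd θ lam g w₀ wθ x := fun x hx => by
    rw [derivWithin_congr hΦH (hΦH hx)]
    exact hd1 x hx
  have hd2 : ∀ x ∈ Icc (0:ℝ) θ,
      derivWithin (derivWithin Φ (Icc 0 θ)) (Icc 0 θ) x
        = hgc θ g x - lam ^ 2 * hH θ lam g w₀ wθ x := fun x hx => by
    rw [derivWithin_congr (fun y hy => hdΦ y hy) (hdΦ x hx)]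
    exact ((hasDerivAt_hHd θ lam g w₀ wθ hlam hsin hgcont x).hasDerivWithinAt).derivWithin
      (hud x hx)
  have h0mem : (0:ℝ) ∈ Icc (0:ℝ) θ := ⟨le_refl 0, hθ.le⟩
  have hθmem : θ ∈ Icc (0:ℝ) θ := ⟨hθ.le, le_refl θ⟩
  constructor
  · refine ⟨(contDiff_hH θ lam g w₀ wθ hlam hsin hgcont).contDiffOn.congr
      (fun x hx => hΦH hx), ?_, ?_, ?_⟩
    · intro φ hφ
      have hφ' : φ ∈ Icc (0:ℝ) θ := Ioo_subset_Icc_self hφ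
      rw [hd2 φ hφ', hΦH hφ', sub_add_cancel]
      exact hgc_eqOn θ g hφ'
    · rw [hdΦ 0 h0mem, hHd_zero θ lam g w₀ wθ hsin]
    · rw [hdΦ θ hθmem, hHd_theta θ lam g w₀ wθ hsin]
  · rintro Ψ ⟨hΨcd, hΨode, hΨ0, hΨθ⟩
    set D := Icc (0:ℝ) θ with hD
    set Ψ' := derivWithin Ψ D with hΨ'def
    set Ψ'' := derivWithin Ψ' D with hΨ''def
    have hΨdiff : DifferentiableOn ℝ Ψ D := hΨcd.differentiableOn (by norm_num)
    have hΨ'cd : ContDiffOn ℝ 1 Ψ' D := hΨcd.derivWithin hud (by norm_num)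
    have hΨ'diff : DifferentiableOn ℝ Ψ' D := hΨ'cd.differentiableOn (by norm_num)
    have hΨ'cont : ContinuousOn Ψ' D := hΨ'cd.continuousOn
    have hΨ''cont : ContinuousOn Ψ'' D := hΨ'cd.continuousOn_derivWithin hud (le_refl 1)
    -- the ODE extends to the closed interval by continuity
    have hode : ∀ x ∈ D, Ψ'' x + lam ^ 2 * Ψ x - g x = 0 := by
      intro x hx
      have hcl : x ∈ closure (Ioo (0:ℝ) θ) := by rwa [closure_Ioo hθ.ne]
      have hnb : (𝓝[Ioo (0:ℝ) θ] x).NeBot := mem_closure_iff_nhdsWithin_neBot.1 hcl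
      have h1 : Filter.Tendsto (fun y => Ψ'' y + lam ^ 2 * Ψ y - g y) (𝓝[Ioo (0:ℝ) θ] x)
          (𝓝 (Ψ'' x + lam ^ 2 * Ψ x - g x)) :=
        (((hΨ''cont x hx).add (continuousWithinAt_const.mul (hΨcd.continuousOn x hx))).sub
          (hg x hx)).mono Ioo_subset_Icc_self
      have h2 : Filter.Tendsto (fun y => Ψ'' y + lam ^ 2 * Ψ y - g y) (𝓝[Ioo (0:ℝ) θ] x)
          (𝓝 0) := by
        have hc : Filter.Tendsto (fun _ : ℝ => (0:ℂ)) (𝓝[Ioo (0:ℝ) θ] x) (𝓝 0) :=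
          tendsto_const_nhds
        refine Filter.Tendsto.congr' ?_ hc
        filter_upwards [self_mem_nhdsWithin] with y hy
        rw [eq_comm, sub_eq_zero]
        exact hΨode y hy
      exact tendsto_nhds_unique h1 h2
    set p : ℝ → ℂ := fun x =>
      (Ψ' x - hHd θ lam g w₀ wθ x) * Complex.cos (lam * x)
        + lam * (Ψ x - hH θ lam g w₀ wθ x) * Complex.sin (lam * x) with hpdef
    set q : ℝ → ℂ := fun x =>
      (Ψ' x - hHd θ lam g w₀ wθ x) * Complex.sin (lam * x)
        - lam * (Ψ x - hH θ lam g w₀ wθ x) * Complex.cos (lam * x) with hqdef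
    have hpql : ∀ x ∈ D, HasDerivWithinAt p 0 D x ∧ HasDerivWithinAt q 0 D x := by
      intro x hx
      have hΨat : HasDerivWithinAt Ψ (Ψ' x) D x := (hΨdiff x hx).hasDerivWithinAt
      have hΨ'at : HasDerivWithinAt Ψ' (Ψ'' x) D x := (hΨ'diff x hx).hasDerivWithinAt
      have hHat : HasDerivWithinAt (hH θ lam g w₀ wθ) (hHd θ lam g w₀ wθ x) D x :=
        (hasDerivAt_hH θ lam g w₀ wθ hlam hsin hgcont x).hasDerivWithinAt
      have hHdat : HasDerivWithinAt (hHd θ lam g w₀ wθ)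
          (hgc θ g x - lam ^ 2 * hH θ lam g w₀ wθ x) D x :=
        (hasDerivAt_hHd θ lam g w₀ wθ hlam hsin hgcont x).hasDerivWithinAt
      have hcosw : HasDerivWithinAt (fun y : ℝ => Complex.cos (lam * y))
          (-(Complex.sin (lam * x) * lam)) D x := (hasDerivAt_cos_mul lam x).hasDerivWithinAt
      have hsinw : HasDerivWithinAt (fun y : ℝ => Complex.sin (lam * y))
          (Complex.cos (lam * x) * lam) D x := (hasDerivAt_sin_mul lam x).hasDerivWithinAt
      have he := hode x hx
      have hgx : hgc θ g x = g x := hgc_eqOn θ g hx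
      constructor
      · have h := ((hΨ'at.sub hHdat).mul hcosw).add
          (((hΨat.sub hHat).const_mul lam).mul hsinw)
        convert h using 2
        · rfl
        · rfl
        simp only [Pi.sub_apply]
        rw [← hgx] at he
        linear_combination (-(Complex.cos (lam * (x:ℂ)))) * he
      · have h := ((hΨ'at.sub hHdat).mul hsinw).sub
          (((hΨat.sub hHat).const_mul lam).mul hcosw)
        convert h using 2
        · rfl
        · rfl
        simp only [Pi.sub_apply]
        rw [← hgx] at he
        linear_combination (-(Complex.sin (lam * (x:ℂ)))) * he
    have hcosc : Continuous fun y : ℝ => Complex.cos (lam * y) :=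
      Complex.continuous_cos.comp (by fun_prop)
    have hsinc : Continuous fun y : ℝ => Complex.sin (lam * y) :=
      Complex.continuous_sin.comp (by fun_prop)
    have hHdcont := (cont_hHd θ lam g w₀ wθ hlam hsin hgcont)
    have hHcont := (cont_hH θ lam g w₀ wθ hlam hsin hgcont)
    have hpcont : ContinuousOn p D :=
      ((hΨ'cont.sub hHdcont.continuousOn).mul hcosc.continuousOn).add
        (((continuousOn_const.mul (hΨcd.continuousOn.sub hHcont.continuousOn))).mul
          hsinc.continuousOn)
    have hqcont : ContinuousOn q D :=
      ((hΨ'cont.sub hHdcont.continuousOn).mul hsinc.continuousOn).sub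
        (((continuousOn_const.mul (hΨcd.continuousOn.sub hHcont.continuousOn))).mul
          hcosc.continuousOn)
    have hpc : ∀ x ∈ D, p x = p 0 :=
      constant_of_has_deriv_right_zero hpcont (fun x hx =>
        ((hpql x (Ico_subset_Icc_self hx)).1).mono_of_mem_nhdsWithin (Icc_mem_nhdsGE_of_mem hx))
    have hqc : ∀ x ∈ D, q x = q 0 :=
      constant_of_has_deriv_right_zero hqcont (fun x hx =>
        ((hpql x (Ico_subset_Icc_self hx)).2).mono_of_mem_nhdsWithin (Icc_mem_nhdsGE_of_mem hx))
    have hp0 : p 0 = 0 := by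
      simp only [hpdef, hΨ0, hHd_zero θ lam g w₀ wθ hsin]
      push_cast
      simp
    have hpzero : ∀ x ∈ D, p x = 0 := fun x hx => (hpc x hx).trans hp0
    have huθ : Ψ θ - hH θ lam g w₀ wθ θ = 0 := by
      have hpθ := hpzero θ hθmem
      simp only [hpdef, hΨθ, hHd_theta θ lam g w₀ wθ hsin, sub_self, zero_mul, zero_add] at hpθ
      rcases mul_eq_zero.1 hpθ with h | h
      · rcases mul_eq_zero.1 h with h' | h'
        · exact absurd h' hlam
        · exact h'
      · exact absurd h hsin
    have hq0 : q 0 = 0 := by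
      have hqθ := hqc θ hθmem
      have : q θ = 0 := by
        simp only [hqdef]
        rw [hΨθ, hHd_theta θ lam g w₀ wθ hsin, huθ]
        ring
      rw [this] at hqθ
      exact hqθ.symm
    have hqzero : ∀ x ∈ D, q x = 0 := fun x hx => (hqc x hx).trans hq0
    intro x hx
    have hpx := hpzero x hx
    have hqx := hqzero x hx
    have trig := Complex.sin_sq_add_cos_sq (lam * x)
    have hkey : lam * (Ψ x - hH θ lam g w₀ wθ x)
        = p x * Complex.sin (lam * x) - q x * Complex.cos (lam * x) := by
      simp only [hpdef, hqdef]
      linear_combination (-(Ψ x - hH θ lam g w₀ wθ x) * lam) * trig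
    rw [hpx, hqx, zero_mul, zero_mul, sub_zero] at hkey
    have hu : Ψ x - hH θ lam g w₀ wθ x = 0 := by
      rcases mul_eq_zero.1 hkey with h | h
      · exact absurd h hlam
      · exact h
    show Ψ x = Φ x
    rw [hΦH hx]
    exact sub_eq_zero.1 hu
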